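/- Let B be a GA–Rota–Baxter operator on a group G with H = Im B. Then H is a commutative subgroup of G. -/

import Mathlib

/-- For a GA–Rota–Baxter operator `B` on `G`, the image `H = Im B` is a
commutative subgroup of `G`. -/
theorem stmt_7 {G : Type*} [Group G] (B : G → G)
    (hB : ∀ g h : G, B g * B h = B (g * B g * h * (B g)⁻¹))
    (hGA : ∀ g h : G,
      (B g * B h = B (B g * h) ∧ B (g * B h) = B (g * h)) ∨
      (B g * B h = B (g * B h) ∧ B (B g * h) = B (g * h))) :
    ∃ H : Subgroup G, (H : Set G) = Set.range B ∧
      ∀ a ∈ H, ∀ b ∈ H, a * b = b * a := by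
  -- B 1 = 1
  have hone : B 1 = 1 := by
    have h := hB 1 1
    simp only [one_mul, mul_one, mul_inv_cancel] at h
    exact mul_eq_left.mp h
  -- B is idempotent
  have hidem : ∀ g, B (B g) = B g := by
    intro g
    rcases hGA g 1 with ⟨h1, _⟩ | ⟨_, h2⟩
    · simp only [hone, mul_one] at h1
      exact h1.symm
    · simp only [mul_one] at h2
      exact h2
  -- fixed points are closed under multiplication
  have hfixmul : ∀ a b : G, B a = a → B b = b → B (a * b) = a * b := by
    intro a b ha hb
    rcases hGA a b with ⟨h1, _⟩ | ⟨h1, _⟩ <;> rw [ha, hb] at h1 <;> exact h1.symm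
  -- elements of the range are fixed
  have hrangefix : ∀ a : G, a ∈ Set.range B → B a = a := by
    rintro a ⟨g, rfl⟩; exact hidem g
  -- range is closed under multiplication
  have hmulmem : ∀ a b : G, a ∈ Set.range B → b ∈ Set.range B →
      a * b ∈ Set.range B := by
    rintro a b ⟨g, rfl⟩ ⟨h, rfl⟩
    exact ⟨g * B g * h * (B g)⁻¹, (hB g h).symm⟩
  -- range is closed under inverse
  have hinvmem : ∀ a : G, a ∈ Set.range B → a⁻¹ ∈ Set.range B := by
    rintro a ⟨g, rfl⟩
    refine ⟨(B g)⁻¹ * g⁻¹ * B g, ?_⟩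
    have h := hB g ((B g)⁻¹ * g⁻¹ * B g)
    have e : g * B g * ((B g)⁻¹ * g⁻¹ * B g) * (B g)⁻¹ = 1 := by group
    rw [e, hone] at h
    exact (inv_eq_of_mul_eq_one_right h).symm
  refine ⟨{ carrier := Set.range B
            one_mem' := ⟨1, hone⟩
            mul_mem' := fun ha hb => hmulmem _ _ ha hb
            inv_mem' := fun ha => hinvmem _ ha }, rfl, ?_⟩
  intro a ha b hb
  -- here ha hb : membership in the subgroup, i.e. in the range
  have ha' : a ∈ Set.range B := ha
  have hb' : b ∈ Set.range B := hb
  have fa : B a = a := hrangefix a ha'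
  have fb : B b = b := hrangefix b hb'
  have fainv : B a⁻¹ = a⁻¹ := hrangefix a⁻¹ (hinvmem a ha')
  have faa : B (a * a) = a * a := hfixmul a a fa fa
  have faab : B (a * a * b) = a * a * b := hfixmul (a * a) b faa fb
  have fbig : B (a * a * b * a⁻¹) = a * a * b * a⁻¹ :=
    hfixmul (a * a * b) a⁻¹ faab fainv
  have key : a * b = a * a * b * a⁻¹ := by
    have h := hB a b
    rw [fa, fb] at h
    rw [h, fbig]
  calc a * b = a⁻¹ * (a * a * b * a⁻¹) * a := by group
    _ = a⁻¹ * (a * b) * a := by rw [← key]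
    _ = b * a := by group
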